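/- Let W be the Coxeter group on S = {s, t, t', c} with o(st) = o(st') = 3, o(ct) = o(ct') = 4, o(sc) = 2 and o(tt') = ∞. Define θ: S → W by θ(c) = c, θ(s) = sc, θ(t) = stcsts, θ(t') = st'cst's. Then θ extends uniquely to an involutory automorphism of W. -/

import Mathlib

section WordLemmas

theorem c3aux_swap_pow {G : Type*} [Group G] (a b : G) (n : ℕ) (h : (a*b)^n = 1) :
    (b*a)^n = 1 := by
  have e : b * a = a⁻¹ * (a * b) * a⁻¹⁻¹ := by group
  rw [e, conj_pow, h, mul_one, inv_inv, inv_mul_cancel]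

theorem c3aux_braid2 {G : Type*} [Group G] (a b : G) (ha : a*a = 1) (hb : b*b = 1)
    (h : (a*b)^2 = 1) : a*b = b*a := by
  have ia : a⁻¹ = a := inv_eq_of_mul_eq_one_right ha
  have ib : b⁻¹ = b := inv_eq_of_mul_eq_one_right hb
  have h2 : (a*b) * (a*b) = 1 := by rw [← pow_two]; exact h
  calc a*b = (a*b)⁻¹ := eq_inv_of_mul_eq_one_left h2
    _ = b*a := by rw [mul_inv_rev, ia, ib]

theorem c3aux_braid3 {G : Type*} [Group G] (a b : G) (ha : a*a = 1) (hb : b*b = 1)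
    (h : (a*b)^3 = 1) : a*b*a = b*a*b := by
  have ia : a⁻¹ = a := inv_eq_of_mul_eq_one_right ha
  have ib : b⁻¹ = b := inv_eq_of_mul_eq_one_right hb
  have h2 : (a*b*a) * (b*a*b) = 1 := by
    have := h
    rw [pow_succ, pow_succ, pow_one] at this
    calc (a*b*a) * (b*a*b) = a*b*(a*b)*(a*b) := by group
      _ = 1 := this
  calc a*b*a = (b*a*b)⁻¹ := eq_inv_of_mul_eq_one_left h2
    _ = b*a*b := by rw [mul_inv_rev, mul_inv_rev, ia, ib]; group

theorem c3aux_braid4 {G : Type*} [Group G] (a b : G) (ha : a*a = 1) (hb : b*b = 1)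
    (h : (a*b)^4 = 1) : a*b*(a*b) = b*a*(b*a) := by
  have ia : a⁻¹ = a := inv_eq_of_mul_eq_one_right ha
  have ib : b⁻¹ = b := inv_eq_of_mul_eq_one_right hb
  have h2 : (a*b*(a*b)) * (a*b*(a*b)) = 1 := by
    have h4 := h
    rw [pow_succ, pow_succ, pow_succ, pow_one] at h4
    calc (a*b*(a*b))*(a*b*(a*b)) = a*b*(a*b)*(a*b)*(a*b) := by group
      _ = 1 := h4
  calc a*b*(a*b) = (a*b*(a*b))⁻¹ := eq_inv_of_mul_eq_one_left h2
    _ = b*a*(b*a) := by rw [mul_inv_rev, mul_inv_rev, ia, ib]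


set_option maxHeartbeats 2000000 in
theorem wordA {W : Type*} [Group W] (s t c : W) (rss : ∀ x : W, s*(s*x)=x) (rtt : ∀ x : W, t*(t*x)=x) (rcc : ∀ x : W, c*(c*x)=x) (rst : ∀ x : W, s*(t*(s*x)) = t*(s*(t*x))) (rsc : ∀ x : W, s*(c*x) = c*(s*x)) (rct : ∀ x : W, c*(t*(c*(t*x))) = t*(c*(t*(c*x)))) (x : W) :
    s * (c * (s * (t * (c * (s * (t * (s * (s * (c * (s * (t * (c * (s * (t * (s * (s * (c * (s * (t * (c * (s * (t * (s * (x)))))))))))))))))))))))) = x :=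
  calc s * (c * (s * (t * (c * (s * (t * (s * (s * (c * (s * (t * (c * (s * (t * (s * (s * (c * (s * (t * (c * (s * (t * (s * (x)))))))))))))))))))))))) = s * (c * (s * (t * (c * (s * (t * (c * (s * (t * (c * (s * (t * (s * (s * (c * (s * (t * (c * (s * (t * (s * (x)))))))))))))))))))))) := congrArg (fun y => s * (c * (s * (t * (c * (s * (t * (y)))))))) (rss (c * (s * (t * (c * (s * (t * (s * (s * (c * (s * (t * (c * (s * (t * (s * (x)))))))))))))))))
    _ = s * (c * (s * (t * (c * (s * (t * (c * (s * (t * (c * (s * (t * (c * (s * (t * (c * (s * (t * (s * (x)))))))))))))))))))) := congrArg (fun y => s * (c * (s * (t * (c * (s * (t * (c * (s * (t * (c * (s * (t * (y)))))))))))))) (rss (c * (s * (t * (c * (s * (t * (s * (x)))))))))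
    _ = c * (s * (s * (t * (c * (s * (t * (c * (s * (t * (c * (s * (t * (c * (s * (t * (c * (s * (t * (s * (x)))))))))))))))))))) := rsc (s * (t * (c * (s * (t * (c * (s * (t * (c * (s * (t * (c * (s * (t * (c * (s * (t * (s * (x)))))))))))))))))))
    _ = c * (t * (c * (s * (t * (c * (s * (t * (c * (s * (t * (c * (s * (t * (c * (s * (t * (s * (x)))))))))))))))))) := congrArg (fun y => c * (y)) (rss (t * (c * (s * (t * (c * (s * (t * (c * (s * (t * (c * (s * (t * (c * (s * (t * (s * (x)))))))))))))))))))
    _ = c * (t * (c * (s * (t * (c * (s * (t * (c * (s * (t * (c * (s * (t * (c * (t * (s * (t * (x)))))))))))))))))) := congrArg (fun y => c * (t * (c * (s * (t * (c * (s * (t * (c * (s * (t * (c * (s * (t * (c * (y)))))))))))))))) (rst (x))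
    _ = c * (t * (c * (s * (t * (c * (s * (t * (c * (s * (t * (s * (c * (t * (c * (t * (s * (t * (x)))))))))))))))))) := congrArg (fun y => c * (t * (c * (s * (t * (c * (s * (t * (c * (s * (t * (y)))))))))))) ((rsc (t * (c * (t * (s * (t * (x))))))).symm)
    _ = c * (t * (c * (s * (t * (c * (s * (t * (c * (s * (t * (s * (t * (c * (t * (c * (s * (t * (x)))))))))))))))))) := congrArg (fun y => c * (t * (c * (s * (t * (c * (s * (t * (c * (s * (t * (s * (y))))))))))))) (rct (s * (t * (x))))
    _ = c * (t * (c * (s * (t * (c * (s * (t * (c * (s * (s * (t * (s * (c * (t * (c * (s * (t * (x)))))))))))))))))) := congrArg (fun y => c * (t * (c * (s * (t * (c * (s * (t * (c * (s * (y))))))))))) ((rst (c * (t * (c * (s * (t * (x))))))).symm)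
    _ = c * (t * (c * (s * (t * (c * (s * (t * (c * (t * (s * (c * (t * (c * (s * (t * (x)))))))))))))))) := congrArg (fun y => c * (t * (c * (s * (t * (c * (s * (t * (c * (y)))))))))) (rss (t * (s * (c * (t * (c * (s * (t * (x)))))))))
    _ = c * (t * (c * (s * (t * (s * (c * (t * (c * (t * (s * (c * (t * (c * (s * (t * (x)))))))))))))))) := congrArg (fun y => c * (t * (c * (s * (t * (y)))))) ((rsc (t * (c * (t * (s * (c * (t * (c * (s * (t * (x))))))))))).symm)
    _ = c * (t * (c * (s * (t * (s * (t * (c * (t * (c * (s * (c * (t * (c * (s * (t * (x)))))))))))))))) := congrArg (fun y => c * (t * (c * (s * (t * (s * (y))))))) (rct (s * (c * (t * (c * (s * (t * (x))))))))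
    _ = c * (t * (c * (s * (s * (t * (s * (c * (t * (c * (s * (c * (t * (c * (s * (t * (x)))))))))))))))) := congrArg (fun y => c * (t * (c * (s * (y))))) ((rst (c * (t * (c * (s * (c * (t * (c * (s * (t * (x))))))))))).symm)
    _ = c * (t * (c * (t * (s * (c * (t * (c * (s * (c * (t * (c * (s * (t * (x)))))))))))))) := congrArg (fun y => c * (t * (c * (y)))) (rss (t * (s * (c * (t * (c * (s * (c * (t * (c * (s * (t * (x)))))))))))))
    _ = c * (t * (c * (t * (s * (c * (t * (c * (c * (s * (t * (c * (s * (t * (x)))))))))))))) := congrArg (fun y => c * (t * (c * (t * (s * (c * (t * (c * (y))))))))) (rsc (t * (c * (s * (t * (x))))))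
    _ = c * (t * (c * (t * (s * (c * (t * (s * (t * (c * (s * (t * (x)))))))))))) := congrArg (fun y => c * (t * (c * (t * (s * (c * (t * (y)))))))) (rcc (s * (t * (c * (s * (t * (x)))))))
    _ = c * (t * (c * (t * (c * (s * (t * (s * (t * (c * (s * (t * (x)))))))))))) := congrArg (fun y => c * (t * (c * (t * (y))))) (rsc (t * (s * (t * (c * (s * (t * (x))))))))
    _ = c * (c * (t * (c * (t * (s * (t * (s * (t * (c * (s * (t * (x)))))))))))) := congrArg (fun y => c * (y)) ((rct (s * (t * (s * (t * (c * (s * (t * (x))))))))).symm)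
    _ = t * (c * (t * (s * (t * (s * (t * (c * (s * (t * (x)))))))))) := rcc (t * (c * (t * (s * (t * (s * (t * (c * (s * (t * (x)))))))))))
    _ = t * (c * (s * (t * (s * (s * (t * (c * (s * (t * (x)))))))))) := congrArg (fun y => t * (c * (y))) ((rst (s * (t * (c * (s * (t * (x))))))).symm)
    _ = t * (c * (s * (t * (t * (c * (s * (t * (x)))))))) := congrArg (fun y => t * (c * (s * (t * (y))))) (rss (t * (c * (s * (t * (x))))))
    _ = t * (c * (s * (c * (s * (t * (x)))))) := congrArg (fun y => t * (c * (s * (y)))) (rtt (c * (s * (t * (x)))))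
    _ = t * (c * (c * (s * (s * (t * (x)))))) := congrArg (fun y => t * (c * (y))) (rsc (s * (t * (x))))
    _ = t * (c * (c * (t * (x)))) := congrArg (fun y => t * (c * (c * (y)))) (rss (t * (x)))
    _ = t * (t * (x)) := congrArg (fun y => t * (y)) (rcc (t * (x)))
    _ = x := rtt (x)

set_option maxHeartbeats 2000000 in
theorem wordB {W : Type*} [Group W] (s t c : W) (rss : ∀ x : W, s*(s*x)=x) (rtt : ∀ x : W, t*(t*x)=x) (rcc : ∀ x : W, c*(c*x)=x) (rst : ∀ x : W, s*(t*(s*x)) = t*(s*(t*x))) (rsc : ∀ x : W, s*(c*x) = c*(s*x)) (rct : ∀ x : W, c*(t*(c*(t*x))) = t*(c*(t*(c*x)))) (x : W) :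
    s * (t * (c * (s * (t * (s * (s * (t * (c * (s * (t * (s * (x)))))))))))) = x :=
  calc s * (t * (c * (s * (t * (s * (s * (t * (c * (s * (t * (s * (x)))))))))))) = s * (t * (c * (s * (t * (t * (c * (s * (t * (s * (x)))))))))) := congrArg (fun y => s * (t * (c * (s * (t * (y)))))) (rss (t * (c * (s * (t * (s * (x)))))))
    _ = s * (t * (c * (s * (c * (s * (t * (s * (x)))))))) := congrArg (fun y => s * (t * (c * (s * (y))))) (rtt (c * (s * (t * (s * (x))))))
    _ = s * (t * (c * (c * (s * (s * (t * (s * (x)))))))) := congrArg (fun y => s * (t * (c * (y)))) (rsc (s * (t * (s * (x)))))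
    _ = s * (t * (c * (c * (t * (s * (x)))))) := congrArg (fun y => s * (t * (c * (c * (y))))) (rss (t * (s * (x))))
    _ = s * (t * (t * (s * (x)))) := congrArg (fun y => s * (t * (y))) (rcc (t * (s * (x))))
    _ = s * (s * (x)) := congrArg (fun y => s * (y)) (rtt (s * (x)))
    _ = x := rss (x)

set_option maxHeartbeats 2000000 in
theorem wordC {W : Type*} [Group W] (s t c : W) (rss : ∀ x : W, s*(s*x)=x) (rtt : ∀ x : W, t*(t*x)=x) (rcc : ∀ x : W, c*(c*x)=x) (rst : ∀ x : W, s*(t*(s*x)) = t*(s*(t*x))) (rsc : ∀ x : W, s*(c*x) = c*(s*x)) (rct : ∀ x : W, c*(t*(c*(t*x))) = t*(c*(t*(c*x)))) (x : W) :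
    s * (t * (c * (s * (t * (s * (c * (s * (t * (c * (s * (t * (s * (c * (s * (t * (c * (s * (t * (s * (c * (s * (t * (c * (s * (t * (s * (c * (x)))))))))))))))))))))))))))) = x :=
  calc s * (t * (c * (s * (t * (s * (c * (s * (t * (c * (s * (t * (s * (c * (s * (t * (c * (s * (t * (s * (c * (s * (t * (c * (s * (t * (s * (c * (x)))))))))))))))))))))))))))) = s * (t * (c * (s * (t * (c * (s * (s * (t * (c * (s * (t * (s * (c * (s * (t * (c * (s * (t * (s * (c * (s * (t * (c * (s * (t * (s * (c * (x)))))))))))))))))))))))))))) := congrArg (fun y => s * (t * (c * (s * (t * (y)))))) (rsc (s * (t * (c * (s * (t * (s * (c * (s * (t * (c * (s * (t * (s * (c * (s * (t * (c * (s * (t * (s * (c * (x)))))))))))))))))))))))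
    _ = s * (t * (c * (s * (t * (c * (t * (c * (s * (t * (s * (c * (s * (t * (c * (s * (t * (s * (c * (s * (t * (c * (s * (t * (s * (c * (x)))))))))))))))))))))))))) := congrArg (fun y => s * (t * (c * (s * (t * (c * (y))))))) (rss (t * (c * (s * (t * (s * (c * (s * (t * (c * (s * (t * (s * (c * (s * (t * (c * (s * (t * (s * (c * (x))))))))))))))))))))))
    _ = s * (t * (c * (s * (t * (c * (t * (c * (s * (t * (c * (s * (s * (t * (c * (s * (t * (s * (c * (s * (t * (c * (s * (t * (s * (c * (x)))))))))))))))))))))))))) := congrArg (fun y => s * (t * (c * (s * (t * (c * (t * (c * (s * (t * (y))))))))))) (rsc (s * (t * (c * (s * (t * (s * (c * (s * (t * (c * (s * (t * (s * (c * (x))))))))))))))))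
    _ = s * (t * (c * (s * (t * (c * (t * (c * (s * (t * (c * (t * (c * (s * (t * (s * (c * (s * (t * (c * (s * (t * (s * (c * (x)))))))))))))))))))))))) := congrArg (fun y => s * (t * (c * (s * (t * (c * (t * (c * (s * (t * (c * (y)))))))))))) (rss (t * (c * (s * (t * (s * (c * (s * (t * (c * (s * (t * (s * (c * (x)))))))))))))))
    _ = s * (t * (c * (s * (t * (c * (t * (c * (s * (t * (c * (t * (c * (s * (t * (c * (s * (s * (t * (c * (s * (t * (s * (c * (x)))))))))))))))))))))))) := congrArg (fun y => s * (t * (c * (s * (t * (c * (t * (c * (s * (t * (c * (t * (c * (s * (t * (y)))))))))))))))) (rsc (s * (t * (c * (s * (t * (s * (c * (x)))))))))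
    _ = s * (t * (c * (s * (t * (c * (t * (c * (s * (t * (c * (t * (c * (s * (t * (c * (t * (c * (s * (t * (s * (c * (x)))))))))))))))))))))) := congrArg (fun y => s * (t * (c * (s * (t * (c * (t * (c * (s * (t * (c * (t * (c * (s * (t * (c * (y))))))))))))))))) (rss (t * (c * (s * (t * (s * (c * (x))))))))
    _ = s * (t * (c * (s * (c * (t * (c * (t * (s * (t * (c * (t * (c * (s * (t * (c * (t * (c * (s * (t * (s * (c * (x)))))))))))))))))))))) := congrArg (fun y => s * (t * (c * (s * (y))))) ((rct (s * (t * (c * (t * (c * (s * (t * (c * (t * (c * (s * (t * (s * (c * (x)))))))))))))))).symm)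
    _ = s * (t * (c * (c * (s * (t * (c * (t * (s * (t * (c * (t * (c * (s * (t * (c * (t * (c * (s * (t * (s * (c * (x)))))))))))))))))))))) := congrArg (fun y => s * (t * (c * (y)))) (rsc (t * (c * (t * (s * (t * (c * (t * (c * (s * (t * (c * (t * (c * (s * (t * (s * (c * (x)))))))))))))))))))
    _ = s * (t * (s * (t * (c * (t * (s * (t * (c * (t * (c * (s * (t * (c * (t * (c * (s * (t * (s * (c * (x)))))))))))))))))))) := congrArg (fun y => s * (t * (y))) (rcc (s * (t * (c * (t * (s * (t * (c * (t * (c * (s * (t * (c * (t * (c * (s * (t * (s * (c * (x))))))))))))))))))))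
    _ = s * (s * (t * (s * (c * (t * (s * (t * (c * (t * (c * (s * (t * (c * (t * (c * (s * (t * (s * (c * (x)))))))))))))))))))) := congrArg (fun y => s * (y)) ((rst (c * (t * (s * (t * (c * (t * (c * (s * (t * (c * (t * (c * (s * (t * (s * (c * (x)))))))))))))))))).symm)
    _ = t * (s * (c * (t * (s * (t * (c * (t * (c * (s * (t * (c * (t * (c * (s * (t * (s * (c * (x)))))))))))))))))) := rss (t * (s * (c * (t * (s * (t * (c * (t * (c * (s * (t * (c * (t * (c * (s * (t * (s * (c * (x)))))))))))))))))))
    _ = t * (c * (s * (t * (s * (t * (c * (t * (c * (s * (t * (c * (t * (c * (s * (t * (s * (c * (x)))))))))))))))))) := congrArg (fun y => t * (y)) (rsc (t * (s * (t * (c * (t * (c * (s * (t * (c * (t * (c * (s * (t * (s * (c * (x)))))))))))))))))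
    _ = t * (c * (s * (s * (t * (s * (c * (t * (c * (s * (t * (c * (t * (c * (s * (t * (s * (c * (x)))))))))))))))))) := congrArg (fun y => t * (c * (s * (y)))) ((rst (c * (t * (c * (s * (t * (c * (t * (c * (s * (t * (s * (c * (x)))))))))))))).symm)
    _ = t * (c * (t * (s * (c * (t * (c * (s * (t * (c * (t * (c * (s * (t * (s * (c * (x)))))))))))))))) := congrArg (fun y => t * (c * (y))) (rss (t * (s * (c * (t * (c * (s * (t * (c * (t * (c * (s * (t * (s * (c * (x))))))))))))))))
    _ = t * (c * (t * (s * (c * (t * (c * (s * (c * (t * (c * (t * (s * (t * (s * (c * (x)))))))))))))))) := congrArg (fun y => t * (c * (t * (s * (c * (t * (c * (s * (y))))))))) ((rct (s * (t * (s * (c * (x)))))).symm)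
    _ = t * (c * (t * (s * (c * (t * (c * (c * (s * (t * (c * (t * (s * (t * (s * (c * (x)))))))))))))))) := congrArg (fun y => t * (c * (t * (s * (c * (t * (c * (y)))))))) (rsc (t * (c * (t * (s * (t * (s * (c * (x)))))))))
    _ = t * (c * (t * (s * (c * (t * (s * (t * (c * (t * (s * (t * (s * (c * (x)))))))))))))) := congrArg (fun y => t * (c * (t * (s * (c * (t * (y))))))) (rcc (s * (t * (c * (t * (s * (t * (s * (c * (x))))))))))
    _ = t * (c * (t * (s * (c * (t * (s * (t * (c * (s * (t * (s * (s * (c * (x)))))))))))))) := congrArg (fun y => t * (c * (t * (s * (c * (t * (s * (t * (c * (y)))))))))) ((rst (s * (c * (x)))).symm)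
    _ = t * (c * (t * (s * (c * (t * (s * (t * (c * (s * (t * (c * (x)))))))))))) := congrArg (fun y => t * (c * (t * (s * (c * (t * (s * (t * (c * (s * (t * (y)))))))))))) (rss (c * (x)))
    _ = t * (c * (t * (c * (s * (t * (s * (t * (c * (s * (t * (c * (x)))))))))))) := congrArg (fun y => t * (c * (t * (y)))) (rsc (t * (s * (t * (c * (s * (t * (c * (x)))))))))
    _ = t * (c * (t * (c * (s * (s * (t * (s * (c * (s * (t * (c * (x)))))))))))) := congrArg (fun y => t * (c * (t * (c * (s * (y)))))) ((rst (c * (s * (t * (c * (x)))))).symm)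
    _ = t * (c * (t * (c * (t * (s * (c * (s * (t * (c * (x)))))))))) := congrArg (fun y => t * (c * (t * (c * (y))))) (rss (t * (s * (c * (s * (t * (c * (x))))))))
    _ = c * (t * (c * (t * (t * (s * (c * (s * (t * (c * (x)))))))))) := (rct (t * (s * (c * (s * (t * (c * (x)))))))).symm
    _ = c * (t * (c * (s * (c * (s * (t * (c * (x)))))))) := congrArg (fun y => c * (t * (c * (y)))) (rtt (s * (c * (s * (t * (c * (x)))))))
    _ = c * (t * (c * (c * (s * (s * (t * (c * (x)))))))) := congrArg (fun y => c * (t * (c * (y)))) (rsc (s * (t * (c * (x)))))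
    _ = c * (t * (c * (c * (t * (c * (x)))))) := congrArg (fun y => c * (t * (c * (c * (y))))) (rss (t * (c * (x))))
    _ = c * (t * (t * (c * (x)))) := congrArg (fun y => c * (t * (y))) (rcc (t * (c * (x))))
    _ = c * (c * (x)) := congrArg (fun y => c * (y)) (rtt (c * (x)))
    _ = x := rcc (x)

set_option maxHeartbeats 2000000 in
theorem wordD {W : Type*} [Group W] (s t c : W) (rss : ∀ x : W, s*(s*x)=x) (rtt : ∀ x : W, t*(t*x)=x) (rcc : ∀ x : W, c*(c*x)=x) (rst : ∀ x : W, s*(t*(s*x)) = t*(s*(t*x))) (rsc : ∀ x : W, s*(c*x) = c*(s*x)) (rct : ∀ x : W, c*(t*(c*(t*x))) = t*(c*(t*(c*x)))) (x : W) :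
    s * (c * (s * (t * (c * (s * (t * (s * (c * (s * (c * (s * (t * (c * (s * (t * (s * (s * (c * (x))))))))))))))))))) = t * (x) :=
  calc s * (c * (s * (t * (c * (s * (t * (s * (c * (s * (c * (s * (t * (c * (s * (t * (s * (s * (c * (x))))))))))))))))))) = s * (c * (s * (t * (c * (s * (t * (s * (c * (s * (c * (s * (t * (c * (s * (t * (c * (x))))))))))))))))) := congrArg (fun y => s * (c * (s * (t * (c * (s * (t * (s * (c * (s * (c * (s * (t * (c * (s * (t * (y))))))))))))))))) (rss (c * (x)))
    _ = c * (s * (s * (t * (c * (s * (t * (s * (c * (s * (c * (s * (t * (c * (s * (t * (c * (x))))))))))))))))) := rsc (s * (t * (c * (s * (t * (s * (c * (s * (c * (s * (t * (c * (s * (t * (c * (x))))))))))))))))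
    _ = c * (t * (c * (s * (t * (s * (c * (s * (c * (s * (t * (c * (s * (t * (c * (x))))))))))))))) := congrArg (fun y => c * (y)) (rss (t * (c * (s * (t * (s * (c * (s * (c * (s * (t * (c * (s * (t * (c * (x))))))))))))))))
    _ = c * (t * (c * (s * (t * (c * (s * (s * (c * (s * (t * (c * (s * (t * (c * (x))))))))))))))) := congrArg (fun y => c * (t * (c * (s * (t * (y)))))) (rsc (s * (c * (s * (t * (c * (s * (t * (c * (x))))))))))
    _ = c * (t * (c * (s * (t * (c * (c * (s * (t * (c * (s * (t * (c * (x))))))))))))) := congrArg (fun y => c * (t * (c * (s * (t * (c * (y))))))) (rss (c * (s * (t * (c * (s * (t * (c * (x)))))))))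
    _ = c * (t * (c * (s * (t * (s * (t * (c * (s * (t * (c * (x))))))))))) := congrArg (fun y => c * (t * (c * (s * (t * (y)))))) (rcc (s * (t * (c * (s * (t * (c * (x))))))))
    _ = c * (t * (c * (s * (s * (t * (s * (c * (s * (t * (c * (x))))))))))) := congrArg (fun y => c * (t * (c * (s * (y))))) ((rst (c * (s * (t * (c * (x)))))).symm)
    _ = c * (t * (c * (t * (s * (c * (s * (t * (c * (x))))))))) := congrArg (fun y => c * (t * (c * (y)))) (rss (t * (s * (c * (s * (t * (c * (x))))))))
    _ = c * (t * (c * (t * (c * (s * (s * (t * (c * (x))))))))) := congrArg (fun y => c * (t * (c * (t * (y))))) (rsc (s * (t * (c * (x)))))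
    _ = c * (t * (c * (t * (c * (t * (c * (x))))))) := congrArg (fun y => c * (t * (c * (t * (c * (y)))))) (rss (t * (c * (x))))
    _ = c * (c * (t * (c * (t * (t * (c * (x))))))) := congrArg (fun y => c * (y)) ((rct (t * (c * (x)))).symm)
    _ = c * (c * (t * (c * (c * (x))))) := congrArg (fun y => c * (c * (t * (c * (y))))) (rtt (c * (x)))
    _ = c * (c * (t * (x))) := congrArg (fun y => c * (c * (t * (y)))) (rcc (x))
    _ = t * (x) := rcc (t * (x))

end WordLemmas

/-- The Coxeter matrix over `(s, t, t', c)` (indexed `0, 1, 2, 3`) with `o(st) = o(st') = 3`,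
`o(ct) = o(ct') = 4`, `o(sc) = 2` and `o(tt') = ∞` (the entry `0` encodes `∞`). -/
def c3Matrix : CoxeterMatrix (Fin 4) where
  M := !![1, 3, 3, 2; 3, 1, 0, 4; 3, 0, 1, 4; 2, 4, 4, 1]
  isSymm := by ext i j; fin_cases i <;> fin_cases j <;> rfl
  diagonal := by intro i; fin_cases i <;> rfl
  off_diagonal := by
    intro i j h; fin_cases i <;> fin_cases j <;> first | (exact absurd rfl h) | decide

set_option maxHeartbeats 4000000 in
/-- Let `W` be the Coxeter group on `S = {s, t, t', c}` with `o(st) = o(st') = 3`,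
`o(ct) = o(ct') = 4`, `o(sc) = 2`, `o(tt') = ∞`.  The map `θ` with `θ(c) = c`, `θ(s) = sc`,
`θ(t) = stcsts`, `θ(t') = st'cst's` extends uniquely to an automorphism of `W`, and this
automorphism is involutory (a `C₃`-transvection). -/
theorem c3_transvection_extends_uniquely
    {W : Type*} [Group W] (cs : CoxeterSystem c3Matrix W)
    (s t t' c : W)
    (hs : s = cs.simple 0) (ht : t = cs.simple 1) (ht' : t' = cs.simple 2)
    (hc : c = cs.simple 3) :
    (∃! φ : W ≃* W,
      φ c = c ∧ φ s = s * c ∧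
      φ t = s * t * c * s * t * s ∧ φ t' = s * t' * c * s * t' * s) ∧
    (∀ φ : W ≃* W,
      (φ c = c ∧ φ s = s * c ∧
        φ t = s * t * c * s * t * s ∧ φ t' = s * t' * c * s * t' * s) →
      ∀ w : W, φ (φ w) = w) := by
  -- basic relations
  have hss : s * s = 1 := by rw [hs]; exact cs.simple_mul_simple_self 0
  have htt : t * t = 1 := by rw [ht]; exact cs.simple_mul_simple_self 1
  have htt' : t' * t' = 1 := by rw [ht']; exact cs.simple_mul_simple_self 2
  have hcc : c * c = 1 := by rw [hc]; exact cs.simple_mul_simple_self 3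
  have hst3 : (s * t) ^ 3 = 1 := by
    rw [hs, ht]; exact cs.simple_mul_simple_pow 0 1
  have hst'3 : (s * t') ^ 3 = 1 := by
    rw [hs, ht']; exact cs.simple_mul_simple_pow 0 2
  have hct4 : (c * t) ^ 4 = 1 := by
    rw [hc, ht]; exact cs.simple_mul_simple_pow 3 1
  have hct'4 : (c * t') ^ 4 = 1 := by
    rw [hc, ht']; exact cs.simple_mul_simple_pow 3 2
  have hsc2 : (s * c) ^ 2 = 1 := by
    rw [hs, hc]; exact cs.simple_mul_simple_pow 0 3
  -- rewrite rules
  have rss : ∀ x : W, s*(s*x) = x := fun x => by rw [← mul_assoc, hss, one_mul]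
  have rtt : ∀ x : W, t*(t*x) = x := fun x => by rw [← mul_assoc, htt, one_mul]
  have rtt' : ∀ x : W, t'*(t'*x) = x := fun x => by rw [← mul_assoc, htt', one_mul]
  have rcc : ∀ x : W, c*(c*x) = x := fun x => by rw [← mul_assoc, hcc, one_mul]
  have bst := c3aux_braid3 s t hss htt hst3
  have bst' := c3aux_braid3 s t' hss htt' hst'3
  have bct := c3aux_braid4 c t hcc htt hct4
  have bct' := c3aux_braid4 c t' hcc htt' hct'4
  have bsc := c3aux_braid2 s c hss hcc hsc2
  have rst : ∀ x : W, s*(t*(s*x)) = t*(s*(t*x)) := fun x => by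
    simp only [← mul_assoc]; rw [bst]
  have rst' : ∀ x : W, s*(t'*(s*x)) = t'*(s*(t'*x)) := fun x => by
    simp only [← mul_assoc]; rw [bst']
  have rsc : ∀ x : W, s*(c*x) = c*(s*x) := fun x => by
    simp only [← mul_assoc]; rw [bsc]
  have bct2 : c*t*c*t = t*c*t*c := by rw [mul_assoc (c*t) c t, bct, ← mul_assoc]
  have bct2' : c*t'*c*t' = t'*c*t'*c := by rw [mul_assoc (c*t') c t', bct', ← mul_assoc]
  have rct : ∀ x : W, c*(t*(c*(t*x))) = t*(c*(t*(c*x))) := fun x => by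
    simp only [← mul_assoc]; rw [bct2]
  have rct' : ∀ x : W, c*(t'*(c*(t'*x))) = t'*(c*(t'*(c*x))) := fun x => by
    simp only [← mul_assoc]; rw [bct2']
  -- key words
  have wA := wordA s t c rss rtt rcc rst rsc rct (1 : W)
  have wA' := wordA s t' c rss rtt' rcc rst' rsc rct' (1 : W)
  have wB := wordB s t c rss rtt rcc rst rsc rct (1 : W)
  have wB' := wordB s t' c rss rtt' rcc rst' rsc rct' (1 : W)
  have wC := wordC s t c rss rtt rcc rst rsc rct (1 : W)
  have wC' := wordC s t' c rss rtt' rcc rst' rsc rct' (1 : W)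
  have wD := wordD s t c rss rtt rcc rst rsc rct (1 : W)
  have wD' := wordD s t' c rss rtt' rcc rst' rsc rct' (1 : W)
  simp only [mul_one] at wA wA' wB wB' wC wC' wD wD'
  -- liftable identities in packaged form
  have idA : ((s*c) * (s*t*c*s*t*s)) ^ 3 = 1 := by
    simpa only [pow_succ, pow_zero, one_mul, mul_assoc] using wA
  have idA' : ((s*c) * (s*t'*c*s*t'*s)) ^ 3 = 1 := by
    simpa only [pow_succ, pow_zero, one_mul, mul_assoc] using wA'
  have idB : ((s*t*c*s*t*s) * (s*t*c*s*t*s)) ^ 1 = 1 := by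
    simpa only [pow_one, mul_assoc] using wB
  have idB' : ((s*t'*c*s*t'*s) * (s*t'*c*s*t'*s)) ^ 1 = 1 := by
    simpa only [pow_one, mul_assoc] using wB'
  have idC : ((s*t*c*s*t*s) * c) ^ 4 = 1 := by
    simpa only [pow_succ, pow_zero, one_mul, mul_assoc] using wC
  have idC' : ((s*t'*c*s*t'*s) * c) ^ 4 = 1 := by
    simpa only [pow_succ, pow_zero, one_mul, mul_assoc] using wC'
  have id03 : ((s*c) * c) ^ 2 = 1 := by
    rw [mul_assoc, hcc, mul_one, pow_two]; exact hss
  -- the lifting function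
  set f : Fin 4 → W := ![s*c, s*t*c*s*t*s, s*t'*c*s*t'*s, c] with hfdef
  have hf0 : f 0 = s*c := rfl
  have hf1 : f 1 = s*t*c*s*t*s := rfl
  have hf2 : f 2 = s*t'*c*s*t'*s := rfl
  have hf3 : f 3 = c := rfl
  have hf : c3Matrix.IsLiftable f := by
    intro i j
    fin_cases i <;> fin_cases j
    · show ((s*c) * (s*c)) ^ 1 = 1
      rw [pow_one, ← pow_two]; exact hsc2
    · exact idA
    · exact idA'
    · exact id03
    · exact c3aux_swap_pow _ _ 3 idA
    · exact idB
    · exact pow_zero _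
    · exact idC
    · exact c3aux_swap_pow _ _ 3 idA'
    · exact pow_zero _
    · exact idB'
    · exact idC'
    · exact c3aux_swap_pow _ _ 2 id03
    · exact c3aux_swap_pow _ _ 4 idC
    · exact c3aux_swap_pow _ _ 4 idC'
    · show (c * c) ^ 1 = 1
      rw [pow_one]; exact hcc
  set φ : W →* W := cs.lift ⟨f, hf⟩ with hφdef
  have hφ : ∀ i, φ (cs.simple i) = f i := fun i => cs.lift_apply_simple hf i
  have vs : φ s = s*c := by have h := (hφ 0).trans hf0; rwa [← hs] at h
  have vt : φ t = s*t*c*s*t*s := by have h := (hφ 1).trans hf1; rwa [← ht] at h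
  have vt' : φ t' = s*t'*c*s*t'*s := by have h := (hφ 2).trans hf2; rwa [← ht'] at h
  have vc : φ c = c := by have h := (hφ 3).trans hf3; rwa [← hc] at h
  -- any monoid hom with these values squares to the identity
  have invol : ∀ (ψ : W →* W), ψ c = c → ψ s = s*c → ψ t = s*t*c*s*t*s →
      ψ t' = s*t'*c*s*t'*s → ψ.comp ψ = MonoidHom.id W := by
    intro ψ h1 h2 h3 h4
    apply cs.ext_simple
    intro i
    fin_cases i
    · show ψ (ψ (cs.simple 0)) = cs.simple 0
      rw [← hs, h2, map_mul, h2, h1, mul_assoc, hcc, mul_one]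
    · show ψ (ψ (cs.simple 1)) = cs.simple 1
      rw [← ht, h3]
      simp only [map_mul, h1, h2, h3]
      simp only [mul_assoc]
      exact wD
    · show ψ (ψ (cs.simple 2)) = cs.simple 2
      rw [← ht', h4]
      simp only [map_mul, h1, h2, h4]
      simp only [mul_assoc]
      exact wD'
    · show ψ (ψ (cs.simple 3)) = cs.simple 3
      rw [← hc, h1, h1]
  have hφφ := invol φ vc vs vt vt'
  have hinv : ∀ w : W, φ (φ w) = w := fun w => by
    have h := DFunLike.congr_fun hφφ w
    simpa using h
  set E : W ≃* W := ⟨⟨φ, φ, hinv, hinv⟩, map_mul φ⟩ with hEdef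
  have hE : ∀ w, E w = φ w := fun w => rfl
  constructor
  · refine ⟨E, ⟨?_, ?_, ?_, ?_⟩, ?_⟩
    · exact (hE c).trans vc
    · exact (hE s).trans vs
    · exact (hE t).trans vt
    · exact (hE t').trans vt'
    · intro ψ ⟨k1, k2, k3, k4⟩
      have h : ψ.toMonoidHom = φ := by
        apply cs.ext_simple
        intro i
        fin_cases i
        · show ψ (cs.simple 0) = φ (cs.simple 0)
          rw [← hs, k2, vs]
        · show ψ (cs.simple 1) = φ (cs.simple 1)
          rw [← ht, k3, vt]
        · show ψ (cs.simple 2) = φ (cs.simple 2)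
          rw [← ht', k4, vt']
        · show ψ (cs.simple 3) = φ (cs.simple 3)
          rw [← hc, k1, vc]
      refine MulEquiv.ext fun w => ?_
      exact DFunLike.congr_fun h w
  · intro ψ ⟨k1, k2, k3, k4⟩ w
    have h := invol ψ.toMonoidHom k1 k2 k3 k4
    have h2 := DFunLike.congr_fun h w
    simpa using h2
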